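/- Fix p ≥ 0 and μ ∈ ℓ² with ∑ i^{2β} μ_i² ≤ R² for some β, R > 0, and suppose α ≥ β/2. Then ∑_{i=1}^∞ i^{2p}/(i^{1+2α+2p} + n) ≤ C n^{−2α/(1+2α+2p)} for a constant C depending only on β and p, for all n ≥ 1. -/

import Mathlib

open Real Finset

/-- Bernoulli-based step: for `y ≥ 1`, `0 < α`,
`(y+1)^(-(1+2α)) ≤ (1/(2α)) * (y^(-(2α)) - (y+1)^(-(2α)))`. -/
lemma step_aux {y α : ℝ} (hy : 1 ≤ y) (hα : 0 < α) :
    (y + 1) ^ (-(1 + 2 * α)) ≤ (1 / (2 * α)) * (y ^ (-(2 * α)) - (y + 1) ^ (-(2 * α))) := by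
  have hy0 : 0 < y := lt_of_lt_of_le one_pos hy
  set A : ℝ := y ^ (2 * α) with hA
  set B : ℝ := (y + 1) ^ (2 * α) with hB
  have hApos : 0 < A := Real.rpow_pos_of_pos hy0 _
  have hBpos : 0 < B := Real.rpow_pos_of_pos (by linarith) _
  have hbern : 1 + (1 + 2 * α) * (1 / y) ≤ (1 + 1 / y) ^ (1 + 2 * α) :=
    one_add_mul_self_le_rpow_one_add
      (by
        have h : (0:ℝ) ≤ 1 / y := by positivity
        linarith) (by linarith)
  have hmul : (y + 1) ^ (1 + 2 * α) = y ^ (1 + 2 * α) * (1 + 1 / y) ^ (1 + 2 * α) := by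
    rw [← Real.mul_rpow hy0.le (by positivity)]
    congr 1
    field_simp
  have hyA : y ^ (1 + 2 * α) = y * A := by
    rw [Real.rpow_add hy0, Real.rpow_one]
  have hyB : (y + 1) ^ (1 + 2 * α) = (y + 1) * B := by
    rw [Real.rpow_add (by linarith), Real.rpow_one]
  have hkey : y * A + (1 + 2 * α) * A ≤ (y + 1) * B := by
    have h1 : y * A * (1 + (1 + 2 * α) * (1 / y)) ≤ y * A * ((1 + 1 / y) ^ (1 + 2 * α)) :=
      mul_le_mul_of_nonneg_left hbern (by positivity)
    have h2 : y * A * (1 + (1 + 2 * α) * (1 / y)) = y * A + (1 + 2 * α) * A := by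
      field_simp
    rw [h2] at h1
    calc y * A + (1 + 2 * α) * A ≤ y * A * ((1 + 1 / y) ^ (1 + 2 * α)) := h1
      _ = (y + 1) * B := by rw [← hyA, ← hmul, hyB]
  have hgA : y ^ (-(2 * α)) = A⁻¹ := by rw [Real.rpow_neg hy0.le]
  have hgB : (y + 1) ^ (-(2 * α)) = B⁻¹ := by rw [Real.rpow_neg (by linarith)]
  have hgAB : (y + 1) ^ (-(1 + 2 * α)) = ((y + 1) * B)⁻¹ := by
    rw [Real.rpow_neg (by linarith), hyB]
  rw [hgA, hgB, hgAB]
  rw [inv_eq_one_div, inv_eq_one_div, inv_eq_one_div,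
    div_sub_div _ _ hApos.ne' hBpos.ne', div_mul_div_comm, one_mul,
    div_le_div_iff₀ (by positivity) (by positivity)]
  nlinarith [mul_le_mul_of_nonneg_right hkey hBpos.le, hApos.le, hBpos.le]

/-- Posterior spread bound: for α ≥ β/2,
∑ i^{2p}/(i^{1+2α+2p}+n) ≤ C n^{−2α/(1+2α+2p)} with C depending only on β, p. -/
theorem stmt_15 (β R p : ℝ) (hβ : 0 < β) (hR : 0 < R) (hp : 0 ≤ p) :
    ∃ C > (0 : ℝ), ∀ (μ : ℕ → ℝ),
      Summable (fun i : ℕ => ((i : ℝ) + 1) ^ (2 * β) * (μ (i + 1)) ^ 2) →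
      (∑' i : ℕ, ((i : ℝ) + 1) ^ (2 * β) * (μ (i + 1)) ^ 2) ≤ R ^ 2 →
      ∀ α : ℝ, β / 2 ≤ α → ∀ n : ℝ, 1 ≤ n →
        ∑' i : ℕ, ((i : ℝ) + 1) ^ (2 * p) / (((i : ℝ) + 1) ^ (1 + 2 * α + 2 * p) + n)
          ≤ C * n ^ (-(2 * α) / (1 + 2 * α + 2 * p)) := by
  refine ⟨2 ^ (1 + 2 * p) + 1 / β, by positivity, ?_⟩
  intro μ _ _ α hα n hn
  have hα0 : 0 < α := lt_of_lt_of_le (by linarith) hα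
  have hn0 : 0 < n := lt_of_lt_of_le one_pos hn
  set s : ℝ := 1 + 2 * α + 2 * p with hs
  have hs1 : 1 < s := by simp only [hs]; linarith
  have hs0 : 0 < s := by linarith
  set N : ℝ := n ^ (1 / s) with hN
  have hN1 : 1 ≤ N := Real.one_le_rpow hn (by positivity)
  have hN0 : 0 < N := lt_of_lt_of_le one_pos hN1
  set k : ℕ := ⌈N⌉₊ with hk
  have hkN : N ≤ (k : ℝ) := Nat.le_ceil N
  have hk1 : 1 ≤ (k : ℝ) := le_trans hN1 hkN
  have hk0 : 0 < (k : ℝ) := lt_of_lt_of_le one_pos hk1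
  have hk2N : (k : ℝ) ≤ 2 * N := by
    have := Nat.ceil_lt_add_one hN0.le
    linarith
  set f : ℕ → ℝ := fun i => ((i : ℝ) + 1) ^ (2 * p) / (((i : ℝ) + 1) ^ s + n) with hf
  have hipos : ∀ i : ℕ, (0 : ℝ) < (i : ℝ) + 1 := fun i => by positivity
  have hdpos : ∀ i : ℕ, (0 : ℝ) < ((i : ℝ) + 1) ^ s + n := fun i => by positivity
  have hfnonneg : ∀ i, 0 ≤ f i := fun i =>
    div_nonneg (Real.rpow_nonneg (hipos i).le _) (hdpos i).le
  set g : ℕ → ℝ := fun i => ((i : ℝ) + 1) ^ (-(1 + 2 * α)) with hg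
  have hfg : ∀ i, f i ≤ g i := by
    intro i
    have h1 : f i ≤ ((i : ℝ) + 1) ^ (2 * p) / ((i : ℝ) + 1) ^ s := by
      apply div_le_div_of_nonneg_left (Real.rpow_nonneg (hipos i).le _)
        (Real.rpow_pos_of_pos (hipos i) _)
      linarith
    calc f i ≤ ((i : ℝ) + 1) ^ (2 * p) / ((i : ℝ) + 1) ^ s := h1
      _ = ((i : ℝ) + 1) ^ (2 * p - s) := (Real.rpow_sub (hipos i) _ _).symm
      _ = g i := by rw [hg]; congr 1; simp only [hs]; ring
  have hgsum : Summable g := by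
    have h1 : Summable (fun i : ℕ => (i : ℝ) ^ (-(1 + 2 * α))) :=
      Real.summable_nat_rpow.mpr (by linarith)
    have h2 := (summable_nat_add_iff 1).mpr h1
    apply h2.congr
    intro i
    simp only [hg]
    push_cast
    ring_nf
  have hfsum : Summable f := Summable.of_nonneg_of_le hfnonneg hfg hgsum
  have hsplit := Summable.sum_add_tsum_nat_add k hfsum
  have hhead : ∑ i ∈ Finset.range k, f i ≤ 2 ^ (1 + 2 * p) * n ^ (-(2 * α) / s) := by
    have hterm : ∀ i ∈ Finset.range k, f i ≤ (k : ℝ) ^ (2 * p) / n := by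
      intro i hi
      have hik : (i : ℝ) + 1 ≤ (k : ℝ) := by
        have : i + 1 ≤ k := Finset.mem_range.mp hi
        exact_mod_cast this
      calc f i ≤ ((i : ℝ) + 1) ^ (2 * p) / n := by
            apply div_le_div_of_nonneg_left (Real.rpow_nonneg (hipos i).le _) hn0
            have := Real.rpow_nonneg (hipos i).le s
            linarith
        _ ≤ (k : ℝ) ^ (2 * p) / n := by
            gcongr
    calc ∑ i ∈ Finset.range k, f i ≤ ∑ _i ∈ Finset.range k, (k : ℝ) ^ (2 * p) / n :=
          Finset.sum_le_sum hterm
      _ = (k : ℝ) * ((k : ℝ) ^ (2 * p) / n) := by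
          rw [Finset.sum_const, Finset.card_range, nsmul_eq_mul]
      _ = (k : ℝ) ^ (1 + 2 * p) / n := by
          rw [Real.rpow_add hk0, Real.rpow_one]; ring
      _ ≤ (2 * N) ^ (1 + 2 * p) / n := by
          gcongr
      _ = 2 ^ (1 + 2 * p) * (N ^ (1 + 2 * p) / n) := by
          rw [Real.mul_rpow (by norm_num) hN0.le]; ring
      _ = 2 ^ (1 + 2 * p) * n ^ (-(2 * α) / s) := by
          congr 1
          have e1 : N ^ (1 + 2 * p) = n ^ (1 / s * (1 + 2 * p)) := by
            rw [hN, ← Real.rpow_mul hn0.le]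
          have e2 : n ^ (1 / s * (1 + 2 * p) - 1) = n ^ (1 / s * (1 + 2 * p)) / n := by
            rw [Real.rpow_sub hn0, Real.rpow_one]
          rw [e1, ← e2]
          congr 1
          field_simp
          linarith
  have htail : ∑' i, f (i + k) ≤ (1 / (2 * α)) * (k : ℝ) ^ (-(2 * α)) := by
    set a : ℕ → ℝ := fun i => ((i : ℝ) + (k : ℝ)) ^ (-(2 * α)) with ha
    have hstep : ∀ i : ℕ, f (i + k) ≤ (1 / (2 * α)) * (a i - a (i + 1)) := by
      intro i
      have hci : (0 : ℝ) ≤ (i : ℝ) := Nat.cast_nonneg i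
      have hy1 : 1 ≤ (i : ℝ) + (k : ℝ) := by linarith
      have hst := step_aux hy1 hα0
      refine le_trans (hfg (i + k)) ?_
      have e1 : g (i + k) = ((i : ℝ) + (k : ℝ) + 1) ^ (-(1 + 2 * α)) := by
        simp only [hg]; push_cast; ring_nf
      have e2 : a (i + 1) = ((i : ℝ) + (k : ℝ) + 1) ^ (-(2 * α)) := by
        simp only [ha]; push_cast; ring_nf
      rw [e1, e2]
      exact hst
    have hpartial : ∀ m : ℕ,
        ∑ i ∈ Finset.range m, f (i + k) ≤ (1 / (2 * α)) * (k : ℝ) ^ (-(2 * α)) := by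
      intro m
      calc ∑ i ∈ Finset.range m, f (i + k)
          ≤ ∑ i ∈ Finset.range m, (1 / (2 * α)) * (a i - a (i + 1)) :=
            Finset.sum_le_sum fun i _ => hstep i
        _ = (1 / (2 * α)) * (a 0 - a m) := by
            rw [← Finset.mul_sum, Finset.sum_range_sub' a]
        _ ≤ (1 / (2 * α)) * a 0 := by
            have h0 : 0 ≤ a m := Real.rpow_nonneg (by positivity) _
            have : a 0 - a m ≤ a 0 := by linarith
            exact mul_le_mul_of_nonneg_left this (by positivity)
        _ = (1 / (2 * α)) * (k : ℝ) ^ (-(2 * α)) := by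
            simp only [ha, Nat.cast_zero, zero_add]
    exact Real.tsum_le_of_sum_range_le (fun i => hfnonneg _) hpartial
  have htail2 : (k : ℝ) ^ (-(2 * α)) ≤ n ^ (-(2 * α) / s) := by
    have h1 : (k : ℝ) ^ (-(2 * α)) ≤ N ^ (-(2 * α)) :=
      Real.rpow_le_rpow_of_nonpos hN0 hkN (by linarith)
    have h2 : N ^ (-(2 * α)) = n ^ (-(2 * α) / s) := by
      rw [hN, ← Real.rpow_mul hn0.le]
      congr 1
      field_simp
    rw [← h2]
    exact h1
  have hnpow0 : (0 : ℝ) ≤ n ^ (-(2 * α) / s) := Real.rpow_nonneg hn0.le _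
  calc ∑' i, f i = ∑ i ∈ Finset.range k, f i + ∑' i, f (i + k) := hsplit.symm
    _ ≤ 2 ^ (1 + 2 * p) * n ^ (-(2 * α) / s) + (1 / (2 * α)) * n ^ (-(2 * α) / s) := by
        have h3 : ∑' i, f (i + k) ≤ (1 / (2 * α)) * n ^ (-(2 * α) / s) :=
          le_trans htail (mul_le_mul_of_nonneg_left htail2 (by positivity))
        linarith
    _ ≤ (2 ^ (1 + 2 * p) + 1 / β) * n ^ (-(2 * α) / s) := by
        have h4 : (1 : ℝ) / (2 * α) ≤ 1 / β := one_div_le_one_div_of_le hβ (by linarith)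
        nlinarith
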